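/- A minimum counterexample G ∈ S_{1,3} to the 2-Decomposition Conjecture contains no parallel edges, i.e., G is a simple graph. -/

import Mathlib

/-- A loopless multigraph: an edge type `E` with an endpoint map into unordered
pairs of distinct vertices. Parallel edges are allowed. -/
structure Multigraph (V E : Type) where
  ends : E → Sym2 V
  loopless : ∀ e, ¬ (ends e).IsDiag

namespace Multigraph

variable {V E : Type}

/-- Adjacency via an edge belonging to the edge subset `S`. -/
def AdjOn (G : Multigraph V E) (S : Set E) (u v : V) : Prop :=
  ∃ e ∈ S, G.ends e = s(u, v)

/-- Adjacency in `G`. -/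
def Adj (G : Multigraph V E) (u v : V) : Prop := G.AdjOn Set.univ u v

/-- The spanning subgraph with edge set `S` is connected. -/
def ConnOn (G : Multigraph V E) (S : Set E) : Prop :=
  Nonempty V ∧ ∀ u v : V, Relation.ReflTransGen (G.AdjOn S) u v

/-- `G` is connected. -/
def Connected (G : Multigraph V E) : Prop := G.ConnOn Set.univ

/-- The degree of a vertex: the number of edges incident to it. -/
noncomputable def deg (G : Multigraph V E) (v : V) : ℕ :=
  Nat.card {e : E // v ∈ G.ends e}

/-- A cycle in `G`, given as a list of (vertex, edge) pairs: the vertices are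
distinct, the edges are distinct, there are at least two of them (so pairs of
parallel edges count as cycles), and the `i`-th edge joins the `i`-th vertex to
the next one (cyclically). -/
def IsCycle (G : Multigraph V E) (c : List (V × E)) : Prop :=
  (c.map Prod.fst).Nodup ∧ (c.map Prod.snd).Nodup ∧ 2 ≤ c.length ∧
  ∀ i : Fin c.length,
    G.ends (c.get i).2 =
      s((c.get i).1, (c.get ⟨(i + 1) % c.length, Nat.mod_lt _ i.pos⟩).1)

/-- Every cycle of `G` is separating: deleting its edges disconnects `G`. -/
def Separating (G : Multigraph V E) : Prop :=
  ∀ c : List (V × E), G.IsCycle c → ¬ G.ConnOn {e | e ∉ c.map Prod.snd}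

/-- The class `S_{1,3}`: connected, every cycle separating, degrees in `{1,2,3}`. -/
def S13 (G : Multigraph V E) : Prop :=
  G.Connected ∧ (∀ v, 1 ≤ G.deg v ∧ G.deg v ≤ 3) ∧ G.Separating

/-- The edge set `T` is a spanning tree of `G`. -/
def IsTreeSet (G : Multigraph V E) (T : Set E) : Prop :=
  G.ConnOn T ∧ ¬ ∃ c, G.IsCycle c ∧ ∀ p ∈ c, p.2 ∈ T

/-- The edge set `M` is a matching of `G`. -/
def IsMatchingSet (G : Multigraph V E) (M : Set E) : Prop :=
  ∀ e ∈ M, ∀ f ∈ M, e ≠ f → ∀ v : V, ¬ (v ∈ G.ends e ∧ v ∈ G.ends f)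

/-- `G` decomposes into a spanning tree and a matching. -/
def HasTM (G : Multigraph V E) : Prop :=
  ∃ T M : Set E, T ∪ M = Set.univ ∧ Disjoint T M ∧
    G.IsTreeSet T ∧ G.IsMatchingSet M

/-- The parameter `φ(G) = |V(G)| + |E(G)|`. -/
noncomputable def phi (G : Multigraph V E) : ℕ := Nat.card V + Nat.card E

/-- `G` is a minimum counterexample (w.r.t. `φ`) to the statement that every
graph in `S_{1,3}` decomposes into a spanning tree and a matching. -/
def MinCex (G : Multigraph V E) : Prop :=
  G.S13 ∧ ¬ G.HasTM ∧
  ∀ (W F : Type), Finite W → Finite F → ∀ H : Multigraph W F,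
    H.S13 → ¬ H.HasTM → G.phi ≤ H.phi

end Multigraph

namespace Multigraph

variable {V E : Type}

lemma get_congr (c : List (V × E)) {a b : ℕ} (ha : a < c.length)
    (hb : b < c.length) (h : a = b) : c.get ⟨a, ha⟩ = c.get ⟨b, hb⟩ := by
  subst h; rfl

variable (G : Multigraph V E)

lemma adjOn_symm {S : Set E} {u v : V} (h : G.AdjOn S u v) : G.AdjOn S v u := by
  obtain ⟨e, he, h⟩ := h; exact ⟨e, he, by rw [h, Sym2.eq_swap]⟩

lemma rtg_symm {S : Set E} {u v : V}
    (h : Relation.ReflTransGen (G.AdjOn S) u v) :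
    Relation.ReflTransGen (G.AdjOn S) v u := by
  induction h with
  | refl => exact .refl
  | tail _ h ih => exact .trans (.single (G.adjOn_symm h)) ih

lemma rtg_mono {S S' : Set E} (hSS : S ⊆ S') {u v : V}
    (h : Relation.ReflTransGen (G.AdjOn S) u v) :
    Relation.ReflTransGen (G.AdjOn S') u v :=
  Relation.ReflTransGen.mono (p := G.AdjOn S') (fun _ _ ⟨e, he, h⟩ => ⟨e, hSS he, h⟩) u v h

lemma add_mod_ne {n i s : ℕ} (hi : i < n) (hs1 : 1 ≤ s) (hs2 : s ≤ n - 1) :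
    (i + s) % n ≠ i := by
  intro heq
  have hd := Nat.div_add_mod (i + s) n
  rcases Nat.eq_zero_or_pos ((i + s) / n) with h0 | h1
  · rw [h0, Nat.mul_zero] at hd; omega
  · have h2 : n ≤ n * ((i + s) / n) := Nat.le_mul_of_pos_right n h1
    omega

lemma cycle_edge_ne {c : List (V × E)} (hc : G.IsCycle c)
    {a b : Fin c.length} (hab : a ≠ b) : (c.get a).2 ≠ (c.get b).2 := by
  intro h
  apply hab
  have hnd := hc.2.1
  have ha : (c.map Prod.snd).get ⟨a, by simp⟩ = (c.get a).2 := by simp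
  have hb : (c.map Prod.snd).get ⟨b, by simp⟩ = (c.get b).2 := by simp
  have := hnd.get_inj_iff.mp (ha.trans (h.trans hb.symm))
  exact Fin.ext (by simpa using congrArg Fin.val this)

lemma cycle_edge_mem (c : List (V × E)) (i : Fin c.length) :
    (c.get i).2 ∈ c.map Prod.snd :=
  List.mem_map.mpr ⟨c.get i, c.get_mem _, rfl⟩

lemma cycle_rel {c : List (V × E)} (hc : G.IsCycle c) (hn : 0 < c.length) (m : ℕ) :
    G.ends (c.get ⟨m % c.length, Nat.mod_lt _ hn⟩).2 =
      s((c.get ⟨m % c.length, Nat.mod_lt _ hn⟩).1,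
        (c.get ⟨(m + 1) % c.length, Nat.mod_lt _ hn⟩).1) := by
  have h := hc.2.2.2 ⟨m % c.length, Nat.mod_lt _ hn⟩
  rw [h]
  have h2 : c.get ⟨(m % c.length + 1) % c.length, Nat.mod_lt _ hn⟩
      = c.get ⟨(m + 1) % c.length, Nat.mod_lt _ hn⟩ :=
    get_congr c _ _ (Nat.mod_add_mod _ _ _)
  rw [h2]

lemma cycle_detour {c : List (V × E)} (hc : G.IsCycle c) (i : Fin c.length) :
    Relation.ReflTransGen
      (G.AdjOn {x | x ∈ c.map Prod.snd ∧ x ≠ (c.get i).2})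
      (c.get ⟨(i + 1) % c.length, Nat.mod_lt _ i.pos⟩).1 (c.get i).1 := by
  have hn2 : 2 ≤ c.length := hc.2.2.1
  have hn0 : 0 < c.length := by omega
  have main : ∀ k, k ≤ c.length - 1 →
      Relation.ReflTransGen
        (G.AdjOn {x | x ∈ c.map Prod.snd ∧ x ≠ (c.get i).2})
        (c.get ⟨(i + 1) % c.length, Nat.mod_lt _ hn0⟩).1
        (c.get ⟨(i + 1 + k) % c.length, Nat.mod_lt _ hn0⟩).1 := by
    intro k
    induction k with
    | zero => intro _; exact .refl
    | succ k ih =>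
      intro hk
      refine .tail (ih (by omega)) ?_
      refine ⟨(c.get ⟨(i + 1 + k) % c.length, Nat.mod_lt _ hn0⟩).2,
        ⟨cycle_edge_mem _ _, ?_⟩, ?_⟩
      · apply G.cycle_edge_ne hc
        intro h
        have h2 : (↑i + 1 + k) % c.length = ↑i := by simpa using congrArg Fin.val h
        have h3 : (↑i + (1 + k)) % c.length = ↑i := by rwa [← Nat.add_assoc]
        exact add_mod_ne i.2 (by omega) (by omega) h3
      · have h := G.cycle_rel hc hn0 (↑i + 1 + k)
        have h2 : c.get ⟨(↑i + 1 + k + 1) % c.length, Nat.mod_lt _ hn0⟩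
            = c.get ⟨(↑i + 1 + (k + 1)) % c.length, Nat.mod_lt _ hn0⟩ :=
          get_congr c _ _ (congrArg (· % c.length) (by omega))
        rw [h2] at h
        exact h
  have hfin := main (c.length - 1) le_rfl
  have heq : (⟨(↑i + 1 + (c.length - 1)) % c.length, Nat.mod_lt _ hn0⟩ : Fin c.length) = i := by
    apply Fin.ext
    show (↑i + 1 + (c.length - 1)) % c.length = ↑i
    have h4 : (↑i + 1 + (c.length - 1)) = ↑i + c.length := by omega
    rw [h4, Nat.add_mod_right, Nat.mod_eq_of_lt i.2]
  rw [heq] at hfin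
  exact hfin

lemma cycle_two_edges {c : List (V × E)} (hc : G.IsCycle c) (j : Fin c.length) :
    ∃ d1 d2 : E, d1 ∈ c.map Prod.snd ∧ d2 ∈ c.map Prod.snd ∧ d1 ≠ d2 ∧
      (c.get j).1 ∈ G.ends d1 ∧ (c.get j).1 ∈ G.ends d2 := by
  have hn2 : 2 ≤ c.length := hc.2.2.1
  have hn0 : 0 < c.length := by omega
  refine ⟨(c.get j).2, (c.get ⟨(j + (c.length - 1)) % c.length, Nat.mod_lt _ hn0⟩).2,
    cycle_edge_mem _ _, cycle_edge_mem _ _, ?_, ?_, ?_⟩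
  · refine (G.cycle_edge_ne hc ?_)
    intro h
    have h2 : (↑j + (c.length - 1)) % c.length = ↑j := by
      simpa using congrArg Fin.val h.symm
    exact add_mod_ne j.2 (by omega) (by omega) h2
  · rw [hc.2.2.2 j]; exact Sym2.mem_mk_left _ _
  · have h := G.cycle_rel hc hn0 (↑j + (c.length - 1))
    rw [h]
    have h1 : (⟨(↑j + (c.length - 1) + 1) % c.length, Nat.mod_lt _ hn0⟩ : Fin c.length) = j := by
      apply Fin.ext
      show (↑j + (c.length - 1) + 1) % c.length = ↑j
      have h4 : (↑j + (c.length - 1) + 1) = ↑j + c.length := by omega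
      rw [h4, Nat.add_mod_right, Nat.mod_eq_of_lt j.2]
    rw [h1]
    exact Sym2.mem_mk_right _ _

lemma cycle_edge_vertex {c : List (V × E)} (hc : G.IsCycle c) {d : E}
    (hd : d ∈ c.map Prod.snd) {w : V} (hw : w ∈ G.ends d) :
    ∃ j : Fin c.length, (c.get j).1 = w := by
  obtain ⟨p, hp, hpd⟩ := List.mem_map.mp hd
  obtain ⟨i, hi⟩ := List.mem_iff_get.mp hp
  subst hpd; subst hi
  rw [hc.2.2.2 i] at hw
  rcases Sym2.mem_iff.mp hw with h | h
  · exact ⟨i, h.symm⟩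
  · exact ⟨_, h.symm⟩

lemma three_distinct_card {α : Type} [Finite α] {a b c : α}
    (hab : a ≠ b) (hac : a ≠ c) (hbc : b ≠ c) : 3 ≤ Nat.card α := by
  classical
  have := Fintype.ofFinite α
  rw [Nat.card_eq_fintype_card]
  have h : ({a, b, c} : Finset α).card = 3 := by
    rw [Finset.card_insert_of_notMem (by simp [hab, hac]),
      Finset.card_insert_of_notMem (by simp [hbc]), Finset.card_singleton]
  calc 3 = ({a, b, c} : Finset α).card := h.symm
    _ ≤ _ := Finset.card_le_univ _

/-- transfer a cycle along an injective edge map preserving `ends`. -/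
lemma isCycle_map {E' : Type} (H : Multigraph V E') (φ : E' → E)
    (hφ : Function.Injective φ) (hends : ∀ x, G.ends (φ x) = H.ends x)
    {c : List (V × E')} (hc : H.IsCycle c) :
    G.IsCycle (c.map (fun p => (p.1, φ p.2))) := by
  obtain ⟨h1, h2, h3, h4⟩ := hc
  refine ⟨?_, ?_, ?_, ?_⟩
  · simpa [List.map_map, Function.comp_def] using h1
  · have heq : (c.map (fun p => (p.1, φ p.2))).map Prod.snd = (c.map Prod.snd).map φ := by
      simp [List.map_map, Function.comp_def]
    rw [heq]
    exact h2.map hφ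
  · simpa using h3
  · intro i
    have hi : (↑i : ℕ) < c.length := by simpa using i.2
    have h := h4 ⟨↑i, hi⟩
    simp only [List.get_eq_getElem, List.getElem_map, List.length_map]
    simp only [List.get_eq_getElem] at h
    rw [hends]
    convert h using 4

/-- lift a cycle of `G` whose edges satisfy `P` to the subtype multigraph. -/
lemma isCycle_subtype {P : E → Prop} (H : Multigraph V {x : E // P x})
    (hends : ∀ x, H.ends x = G.ends x.1)
    {c : List (V × E)} (hc : G.IsCycle c) (hmem : ∀ p ∈ c, P p.2) :
    ∃ c' : List (V × {x : E // P x}), H.IsCycle c' ∧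
      c'.map (fun p => (p.1, p.2.1)) = c := by
  refine ⟨c.pmap (fun (p : V × E) (hp : P p.2) => (p.1, (⟨p.2, hp⟩ : {x : E // P x}))) hmem, ?_, ?_⟩
  · obtain ⟨h1, h2, h3, h4⟩ := hc
    have hfst : (c.pmap (fun (p : V × E) (hp : P p.2) => (p.1, (⟨p.2, hp⟩ : {x : E // P x}))) hmem).map
        Prod.fst = c.map Prod.fst := by
      apply List.ext_getElem (by simp)
      intro i h1' h2'
      simp [List.getElem_pmap]
    have hsnd : ((c.pmap (fun (p : V × E) (hp : P p.2) => (p.1, (⟨p.2, hp⟩ : {x : E // P x}))) hmem).map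
        Prod.snd).map Subtype.val = c.map Prod.snd := by
      apply List.ext_getElem (by simp)
      intro i h1' h2'
      simp [List.getElem_pmap]
    refine ⟨?_, ?_, ?_, ?_⟩
    · rw [hfst]; exact h1
    · exact List.Nodup.of_map Subtype.val (by rw [hsnd]; exact h2)
    · simpa [List.length_pmap] using h3
    · intro i
      have hi : (↑i : ℕ) < c.length := by simpa [List.length_pmap] using i.2
      have h := h4 ⟨↑i, hi⟩
      simp only [List.get_eq_getElem, List.getElem_pmap, List.length_pmap]
      simp only [List.get_eq_getElem] at h
      rw [hends]
      convert h using 4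
  · apply List.ext_getElem (by simp)
    intro i h1' h2'
    simp [List.getElem_pmap]

end Multigraph

open Multigraph in
/-- A minimum counterexample in `S_{1,3}` to the 2-Decomposition
Conjecture contains no parallel edges, i.e. it is a simple graph. -/
theorem stmt_9 {V E : Type} [Finite V] [Finite E] (G : Multigraph V E)
    (hG : G.MinCex) :
    ∀ e f : E, e ≠ f → G.ends e ≠ G.ends f := by
  intro e f hef hends
  obtain ⟨⟨u, v⟩, huv0⟩ := Quot.exists_rep (G.ends e)
  have huv : G.ends e = s(u, v) := huv0.symm
  have hune : u ≠ v := by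
    intro h
    exact G.loopless e (by rw [huv]; exact Sym2.mk_isDiag_iff.mpr h)
  have hue : u ∈ G.ends e := by rw [huv]; exact Sym2.mem_mk_left _ _
  have hve : v ∈ G.ends e := by rw [huv]; exact Sym2.mem_mk_right _ _
  obtain ⟨hS13, hnoTM, hmin⟩ := hG
  obtain ⟨hconn, hdeg, hsepG⟩ := hS13
  have hV : Nonempty V := hconn.1
  -- the 2-cycle made of the parallel pair
  have hc0 : G.IsCycle [(u, e), (v, f)] := by
    refine ⟨by simp [hune], by simp [hef], by simp, ?_⟩
    intro i
    rcases i with ⟨i, hi⟩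
    have hi' : i < 2 := by simpa using hi
    interval_cases i
    · simpa using huv
    · show G.ends f = _
      simp only [List.get]
      rw [← hends, huv, Sym2.eq_swap]
      norm_num [List.get]
  have hsep : ¬ G.ConnOn {x | x ∉ ([(u, e), (v, f)] : List (V × E)).map Prod.snd} :=
    hsepG _ hc0
  have hmemc0 : ∀ x : E, x ∈ ([(u, e), (v, f)] : List (V × E)).map Prod.snd ↔
      (x = e ∨ x = f) := by simp
  -- the graph with f deleted
  set H : Multigraph V {x : E // x ≠ f} :=
    ⟨fun x => G.ends x.1, fun x => G.loopless x.1⟩ with hH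
  have hHends : ∀ x : {x : E // x ≠ f}, H.ends x = G.ends x.1 := fun _ => rfl
  -- H is connected
  have hHconn : H.Connected := by
    refine ⟨hV, fun a b => ?_⟩
    have h := hconn.2 a b
    induction h with
    | refl => exact .refl
    | tail _ hstep ih =>
      obtain ⟨z, _, hz⟩ := hstep
      by_cases hzf : z = f
      · refine .tail ih ⟨⟨e, hef⟩, trivial, ?_⟩
        show G.ends e = _
        rw [hends, ← hzf]; exact hz
      · exact .tail ih ⟨⟨z, hzf⟩, trivial, hz⟩
  -- degrees of H
  have hHdeg : ∀ w, 1 ≤ H.deg w ∧ H.deg w ≤ 3 := by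
    intro w
    constructor
    · have hne : Nonempty {x : {x : E // x ≠ f} // w ∈ H.ends x} := by
        by_cases hw : w ∈ G.ends f
        · exact ⟨⟨⟨e, hef⟩, by show w ∈ G.ends e; rw [hends]; exact hw⟩⟩
        · have h1 : 0 < G.deg w := (hdeg w).1
          have hne2 : Nonempty {x : E // w ∈ G.ends x} := (Nat.card_pos_iff.mp h1).1
          obtain ⟨⟨x, hx⟩⟩ := hne2
          have hxf : x ≠ f := fun h => hw (h ▸ hx)
          exact ⟨⟨⟨x, hxf⟩, hx⟩⟩
      exact Nat.card_pos
    · refine le_trans (Nat.card_le_card_of_injective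
        (fun x => (⟨x.1.1, x.2⟩ : {x : E // w ∈ G.ends x})) ?_) (hdeg w).2
      intro a b hab
      have h' := congrArg (fun t : {x : E // w ∈ G.ends x} => t.1) hab
      simp only at h'
      exact Subtype.ext (Subtype.ext h')
  -- H is separating
  have hHsep : H.Separating := by
    intro c' hc' hco
    have hct : G.IsCycle (c'.map (fun p => (p.1, p.2.1))) :=
      G.isCycle_map H Subtype.val Subtype.val_injective (fun x => rfl) hc'
    apply hsepG _ hct
    refine ⟨hV, fun a b => ?_⟩
    have h := hco.2 a b
    induction h with
    | refl => exact .refl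
    | tail _ hstep ih =>
      obtain ⟨z, hz1, hz2⟩ := hstep
      refine .tail ih ⟨z.1, ?_, hz2⟩
      intro hmem
      apply hz1
      simp only [List.map_map] at hmem
      obtain ⟨q, hq, hq2⟩ := List.mem_map.mp hmem
      have hq2' : q.2.1 = z.1 := by simpa using hq2
      exact List.mem_map.mpr ⟨q, hq, Subtype.ext hq2'⟩
  -- phi decreases
  have hphi : H.phi < G.phi := by
    have hcard : Nat.card {x : E // x ≠ f} < Nat.card E := by
      classical
      have := Fintype.ofFinite E
      simp only [Nat.card_eq_fintype_card]
      exact Fintype.card_subtype_lt (x := f) (by simp)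
    have h1 : H.phi = Nat.card V + Nat.card {x : E // x ≠ f} := rfl
    have h2 : G.phi = Nat.card V + Nat.card E := rfl
    omega
  -- minimality gives a decomposition of H
  have hHTM : H.HasTM := by
    by_contra hno
    have := hmin V {x : E // x ≠ f} inferInstance inferInstance H
      ⟨hHconn, hHdeg, hHsep⟩ hno
    omega
  obtain ⟨T, M, hTMu, hTMd, hT, hM⟩ := hHTM
  -- the bridge fact: no cycle of G avoiding f can use e
  have hbridge : ∀ c : List (V × E), G.IsCycle c → (∀ p ∈ c, p.2 ≠ f) →
      e ∈ c.map Prod.snd → False := by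
    intro c hc hcf hmem
    apply hsep
    obtain ⟨p, hp, hpe⟩ := List.mem_map.mp hmem
    obtain ⟨i, hi⟩ := List.mem_iff_get.mp hp
    have hie : (c.get i).2 = e := by rw [hi]; exact hpe
    have hdet := G.cycle_detour hc i
    have hdet' : Relation.ReflTransGen
        (G.AdjOn {x | x ∉ ([(u, e), (v, f)] : List (V × E)).map Prod.snd})
        (c.get ⟨(↑i + 1) % c.length, Nat.mod_lt _ i.pos⟩).1 (c.get i).1 := by
      refine G.rtg_mono ?_ hdet
      intro x hx
      obtain ⟨hx1, hx2⟩ := hx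
      rw [Set.mem_setOf_eq, hmemc0]
      push_neg
      constructor
      · intro hxe; exact hx2 (by rw [hxe, ← hie])
      · intro hxf
        obtain ⟨q, hq, hq2⟩ := List.mem_map.mp hx1
        exact hcf q hq (hq2.trans hxf)
    have hcyci := hc.2.2.2 i
    rw [hie] at hcyci
    refine ⟨hV, fun a b => ?_⟩
    have h := hconn.2 a b
    induction h with
    | refl => exact .refl
    | @tail b1 b2 _ hstep ih =>
      obtain ⟨z, _, hz⟩ := hstep
      by_cases hzef : z = e ∨ z = f
      · have hze : G.ends z = G.ends e := by
          rcases hzef with h' | h'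
          · rw [h']
          · rw [h', ← hends]
        have hsym : s(b1, b2) =
            s((c.get i).1, (c.get ⟨(↑i + 1) % c.length, Nat.mod_lt _ i.pos⟩).1) := by
          rw [← hz, hze, hcyci]
        rcases Sym2.eq_iff.mp hsym with ⟨h1', h2'⟩ | ⟨h1', h2'⟩
        · refine .trans ih ?_
          rw [h1', h2']
          exact G.rtg_symm hdet'
        · refine .trans ih ?_
          rw [h1', h2']
          exact hdet'
      · push_neg at hzef
        refine .tail ih ⟨z, ?_, hz⟩
        rw [Set.mem_setOf_eq, hmemc0]
        push_neg
        exact hzef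
  -- the degree-count bound near u and v
  have hcard2 : ∀ w : V, w ∈ G.ends f → Nat.card {x : E // w ∈ G.ends x ∧ x ≠ f} ≤ 2 := by
    intro w hw
    have hinj : Function.Injective
        (fun o : Option {x : E // w ∈ G.ends x ∧ x ≠ f} =>
          (Option.elim o ⟨f, hw⟩ (fun x => ⟨x.1, x.2.1⟩) : {x : E // w ∈ G.ends x})) := by
      intro a b hab
      match a, b with
      | none, none => rfl
      | none, some x =>
        simp only [Option.elim, Subtype.mk.injEq] at hab
        exact absurd hab.symm x.2.2
      | some x, none =>
        simp only [Option.elim, Subtype.mk.injEq] at hab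
        exact absurd hab x.2.2
      | some x, some y =>
        simp only [Option.elim, Subtype.mk.injEq] at hab
        exact congrArg some (Subtype.ext hab)
    have h1 := Nat.card_le_card_of_injective _ hinj
    rw [Finite.card_option] at h1
    have h2 : G.deg w ≤ 3 := (hdeg w).2
    have h3 : G.deg w = Nat.card {x : E // w ∈ G.ends x} := rfl
    omega
  -- no cycle of G avoiding f passes through u or v
  have hvertex : ∀ (w : V) (c : List (V × E)), G.IsCycle c → (∀ p ∈ c, p.2 ≠ f) →
      w ∈ G.ends e → (∃ j : Fin c.length, (c.get j).1 = w) → False := by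
    rintro w c hc hcf hwe ⟨j, hj⟩
    obtain ⟨d1, d2, hd1, hd2, hd12, hwd1, hwd2⟩ := G.cycle_two_edges hc j
    rw [hj] at hwd1 hwd2
    have hd1f : d1 ≠ f := by
      obtain ⟨p, hp, hpd⟩ := List.mem_map.mp hd1
      exact hpd ▸ hcf p hp
    have hd2f : d2 ≠ f := by
      obtain ⟨p, hp, hpd⟩ := List.mem_map.mp hd2
      exact hpd ▸ hcf p hp
    by_cases hed : e = d1 ∨ e = d2
    · apply hbridge c hc hcf
      rcases hed with h' | h'
      · rw [h']; exact hd1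
      · rw [h']; exact hd2
    · push_neg at hed
      have hwf : w ∈ G.ends f := hends ▸ hwe
      have h3 := three_distinct_card
        (a := (⟨d1, hwd1, hd1f⟩ : {x : E // w ∈ G.ends x ∧ x ≠ f}))
        (b := ⟨d2, hwd2, hd2f⟩) (c := ⟨e, hwe, hef⟩)
        (fun h => hd12 (congrArg Subtype.val h))
        (fun h => hed.1 (congrArg Subtype.val h).symm)
        (fun h => hed.2 (congrArg Subtype.val h).symm)
      have h2 := hcard2 w hwf
      omega
  -- build the decomposition of G
  set N : Set {x : E // x ≠ f} := {x | u ∈ G.ends x.1 ∨ v ∈ G.ends x.1} with hN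
  set TG : Set E := Subtype.val '' (T ∪ N) with hTG
  set MG : Set E := Subtype.val '' (M \ N) ∪ {f} with hMG
  apply hnoTM
  refine ⟨TG, MG, ?_, ?_, ⟨?_, ?_⟩, ?_⟩
  · -- union is everything
    ext x
    simp only [Set.mem_union, Set.mem_univ, iff_true]
    by_cases hxf : x = f
    · right; right; exact hxf
    · have hx' : (⟨x, hxf⟩ : {x : E // x ≠ f}) ∈ T ∪ M := by rw [hTMu]; trivial
      rcases hx' with h | h
      · left; exact ⟨_, Or.inl h, rfl⟩
      · by_cases hxN : (⟨x, hxf⟩ : {x : E // x ≠ f}) ∈ N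
        · left; exact ⟨_, Or.inr hxN, rfl⟩
        · right; left; exact ⟨_, ⟨h, hxN⟩, rfl⟩
  · -- disjointness
    rw [Set.disjoint_left]
    rintro x ⟨a, haT, hav⟩ hxM
    rcases hxM with ⟨b, hbM, hbv⟩ | hxf
    · have hab : a = b := Subtype.ext (hav.trans hbv.symm)
      subst hab
      rcases haT with h | h
      · exact Set.disjoint_left.mp hTMd h hbM.1
      · exact hbM.2 h
    · exact a.2 (hav.trans hxf)
  · -- spanning connectivity of TG
    refine ⟨hV, fun a b => ?_⟩
    have h := hT.1.2 a b
    induction h with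
    | refl => exact .refl
    | tail _ hstep ih =>
      obtain ⟨z, hzT, hz⟩ := hstep
      exact .tail ih ⟨z.1, ⟨z, Or.inl hzT, rfl⟩, hz⟩
  · -- acyclicity of TG
    rintro ⟨c, hc, hcT⟩
    have hcf : ∀ p ∈ c, p.2 ≠ f := by
      intro p hp
      obtain ⟨a, _, hav⟩ := hcT p hp
      exact hav ▸ a.2
    by_cases hu : ∃ j : Fin c.length, (c.get j).1 = u
    · exact hvertex u c hc hcf hue hu
    by_cases hv : ∃ j : Fin c.length, (c.get j).1 = v
    · exact hvertex v c hc hcf hve hv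
    push_neg at hu hv
    obtain ⟨c', hc', hc'map⟩ := G.isCycle_subtype H (fun _ => rfl) hc hcf
    refine hT.2 ⟨c', hc', ?_⟩
    intro p hp
    have hpc : (p.1, p.2.1) ∈ c := by
      rw [← hc'map]; exact List.mem_map_of_mem hp
    obtain ⟨a, haT, hav⟩ := hcT _ hpc
    have hap : a = p.2 := Subtype.ext hav
    rw [hap] at haT
    rcases haT with h | h
    · exact h
    · exfalso
      have hmem : p.2.1 ∈ c.map Prod.snd := by
        rw [← hc'map, List.map_map]
        exact List.mem_map_of_mem hp
      rcases h with h | h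
      · obtain ⟨j, hj⟩ := G.cycle_edge_vertex hc hmem h
        exact hu j hj
      · obtain ⟨j, hj⟩ := G.cycle_edge_vertex hc hmem h
        exact hv j hj
  · -- MG is a matching
    rintro x hx y hy hxy w ⟨hwx, hwy⟩
    rcases hx with ⟨a, haM, hav⟩ | hxf
    · rcases hy with ⟨b, hbM, hbv⟩ | hyf
      · have hab : a ≠ b := fun h => hxy (hav ▸ hbv ▸ congrArg Subtype.val h)
        exact hM a haM.1 b hbM.1 hab w ⟨by rw [hHends, hav]; exact hwx,
          by rw [hHends, hbv]; exact hwy⟩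
      · -- y = f
        apply haM.2
        have hwf : w ∈ G.ends f := hyf ▸ hwy
        have : w ∈ G.ends e := hends ▸ hwf
        rw [huv] at this
        rcases Sym2.mem_iff.mp this with h | h
        · exact Or.inl (by rw [hav, ← h]; exact hwx)
        · exact Or.inr (by rw [hav, ← h]; exact hwx)
    · rcases hy with ⟨b, hbM, hbv⟩ | hyf
      · apply hbM.2
        have hwf : w ∈ G.ends f := hxf ▸ hwx
        have : w ∈ G.ends e := hends ▸ hwf
        rw [huv] at this
        rcases Sym2.mem_iff.mp this with h | h
        · exact Or.inl (by rw [hbv, ← h]; exact hwy)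
        · exact Or.inr (by rw [hbv, ← h]; exact hwy)
      · exact hxy (hxf.trans hyf.symm)
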